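/- For every x > 0, Γ(2/3) · Σ_{n=0}^∞ (-1)^n · 3^{(n+1)/3 - 1} · x^{-(n+1)/3 - 1} / ( n! · Γ(1-(n+1)/3) · Γ(1-(n+2)/3) ) = Γ(2/3) · x^{-4/3} · e^{-1/(9x)} / (2π · 3^{1/6}), i.e. g_2(x) = Γ(2/3) · x^{-4/3} · e^{-1/(9x)} / (2π · 3^{1/6}); in particular the terms with n not divisible by 3 vanish and the series reduces to x^{-4/3}/(3^{2/3} Γ(1/3)) · Σ_{p=0}^∞ (-1)^p (9x)^{-p} / p!. -/

import Mathlib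

open Real

lemma keyGamma (p : ℕ) :
    Real.sqrt 3 * (((3*p).factorial : ℝ) * Real.Gamma (1/3 - p) * Real.Gamma (2/3 - p))
      = 2 * Real.pi * p.factorial * 3^(3*p) := by
  induction p with
  | zero =>
      have h := Real.Gamma_mul_Gamma_one_sub (1/3)
      rw [show (1:ℝ) - 1/3 = 2/3 by norm_num, show Real.pi * (1/3) = Real.pi/3 by ring,
        Real.sin_pi_div_three] at h
      have h3 : (0:ℝ) < Real.sqrt 3 := by positivity
      have h3' : Real.sqrt 3 * Real.sqrt 3 = 3 := Real.mul_self_sqrt (by norm_num)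
      rw [eq_div_iff (by positivity : Real.sqrt 3 / 2 ≠ 0)] at h
      norm_num
      nlinarith [h, h3']
  | succ p ih =>
      set P := (p:ℕ) with hP
      have hc1 : (1:ℝ)/3 - ((P:ℝ)+1) ≠ 0 := by
        have : (0:ℝ) ≤ (P:ℝ) := Nat.cast_nonneg P
        intro h; nlinarith
      have hc2 : (2:ℝ)/3 - ((P:ℝ)+1) ≠ 0 := by
        have : (0:ℝ) ≤ (P:ℝ) := Nat.cast_nonneg P
        intro h; nlinarith
      have hA : Real.Gamma (1/3 - (P:ℝ)) = (1/3 - ((P:ℝ)+1)) * Real.Gamma (1/3 - ((P:ℝ)+1)) := by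
        rw [show (1:ℝ)/3 - (P:ℝ) = (1/3 - ((P:ℝ)+1)) + 1 by ring]
        exact Real.Gamma_add_one hc1
      have hB : Real.Gamma (2/3 - (P:ℝ)) = (2/3 - ((P:ℝ)+1)) * Real.Gamma (2/3 - ((P:ℝ)+1)) := by
        rw [show (2:ℝ)/3 - (P:ℝ) = (2/3 - ((P:ℝ)+1)) + 1 by ring]
        exact Real.Gamma_add_one hc2
      have hfact : ((3*(p+1)).factorial : ℝ)
          = (3*(P:ℝ)+3)*(3*(P:ℝ)+2)*(3*(P:ℝ)+1)*((3*p).factorial) := by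
        rw [show 3*(p+1) = (3*p).succ.succ.succ by omega]
        simp [Nat.factorial_succ]; ring
      have hcast : ((p+1:ℕ):ℝ) = (P:ℝ) + 1 := by push_cast; ring
      rw [hA, hB] at ih
      rw [hcast, hfact, show 3*(p+1) = 3*p+3 by ring, pow_add]
      push_cast [Nat.factorial_succ]
      linear_combination (27*((P:ℝ)+1)) * ih

lemma gamma_ne_zero_third (p : ℕ) (c : ℝ) (hc0 : 0 < c) (hc1 : c < 1) :
    Real.Gamma (c - p) ≠ 0 := by
  apply Real.Gamma_ne_zero
  intro m h
  have hc : c = (p:ℝ) - m := by linarith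
  rcases le_or_gt m p with hmp | hmp
  · have he : c = ((p - m : ℕ) : ℝ) := by push_cast [hmp]; linarith
    rcases Nat.eq_zero_or_pos (p - m) with h0 | h0
    · rw [h0] at he; simp at he; linarith
    · have h1 : (1:ℝ) ≤ ((p - m : ℕ) : ℝ) := by exact_mod_cast h0
      linarith
  · have h1 : (p:ℝ) < m := by exact_mod_cast hmp
    linarith

/-- The series representation `g_α` of the density of `𝒜_α`
(with `1/Γ` the reciprocal Gamma function, equal to `0` at poles of `Γ`). -/
noncomputable def seriesDensity (α x : ℝ) : ℝ :=
  Real.Gamma (α/(α+1)) * ∑' n : ℕ,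
    (-1:ℝ)^n * (α+1) ^ (((n:ℝ)+1)/(α+1) - 1) * x ^ (-(((n:ℝ)+1)/(α+1)) - 1) /
      ((n.factorial : ℝ) * Real.Gamma (1 - ((n:ℝ)+1)/(α+1)) * Real.Gamma (1 - ((n:ℝ)+2)/(α+1)))

/-- For `α = 2` the series representation of the density of `𝒜_2` sums to the closed
form `Γ(2/3) x^{-4/3} e^{-1/(9x)} / (2π 3^{1/6})`; in particular the terms with `n` not
divisible by `3` vanish and the series reduces to an exponential series. -/
theorem seriesDensity_two (x : ℝ) (hx : 0 < x) :
    seriesDensity 2 x =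
      Real.Gamma (2/3) * x ^ (-(4:ℝ)/3) * Real.exp (-1/(9*x)) /
        (2 * Real.pi * (3:ℝ) ^ ((1:ℝ)/6)) ∧
    seriesDensity 2 x =
      x ^ (-(4:ℝ)/3) / ((3:ℝ) ^ ((2:ℝ)/3) * Real.Gamma (1/3)) *
        ∑' p : ℕ, (-1:ℝ)^p * (9*x) ^ (-(p:ℝ)) / (p.factorial : ℝ) := by
  set F : ℕ → ℝ := fun n =>
    (-1:ℝ)^n * ((2:ℝ)+1) ^ (((n:ℝ)+1)/((2:ℝ)+1) - 1) * x ^ (-(((n:ℝ)+1)/((2:ℝ)+1)) - 1) /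
      ((n.factorial : ℝ) * Real.Gamma (1 - ((n:ℝ)+1)/((2:ℝ)+1)) * Real.Gamma (1 - ((n:ℝ)+2)/((2:ℝ)+1))) with hF
  have hsd : seriesDensity 2 x = Real.Gamma (2/3) * ∑' n, F n := by
    rw [seriesDensity, hF]
    norm_num
  have hvanish : ∀ n : ℕ, n ∉ Set.range (fun p : ℕ => 3*p) → F n = 0 := by
    intro n hn
    have h0 : n % 3 ≠ 0 := by
      intro h; exact hn ⟨n/3, show 3*(n/3) = n by omega⟩
    have h3 : n % 3 = 1 ∨ n % 3 = 2 := by omega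
    rcases h3 with h | h
    · obtain ⟨p, rfl⟩ : ∃ p, n = 3*p+1 := ⟨n/3, by omega⟩
      have : Real.Gamma (1 - (((3*p+1:ℕ):ℝ)+2)/((2:ℝ)+1)) = 0 := by
        rw [show (1:ℝ) - (((3*p+1:ℕ):ℝ)+2)/((2:ℝ)+1) = -(p:ℕ) by push_cast; ring]
        exact Real.Gamma_neg_nat_eq_zero p
      simp only [hF, this, mul_zero, div_zero]
    · obtain ⟨p, rfl⟩ : ∃ p, n = 3*p+2 := ⟨n/3, by omega⟩
      have : Real.Gamma (1 - (((3*p+2:ℕ):ℝ)+1)/((2:ℝ)+1)) = 0 := by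
        rw [show (1:ℝ) - (((3*p+2:ℕ):ℝ)+1)/((2:ℝ)+1) = -(p:ℕ) by push_cast; ring]
        exact Real.Gamma_neg_nat_eq_zero p
      simp only [hF, this, mul_zero, zero_mul, div_zero]
  have hinj : Function.Injective (fun p : ℕ => 3*p) := fun a b h => by simp only at h; omega
  have htsum : ∑' n, F n = ∑' p : ℕ, F (3*p) :=
    (hinj.tsum_eq (fun n hn => by by_contra h; exact hn (hvanish n h))).symm
  have hterm : ∀ p : ℕ, F (3*p)
      = x ^ (-(4:ℝ)/3) / (2*Real.pi*(3:ℝ)^((1:ℝ)/6))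
        * ((-1:ℝ)^p * (9*x) ^ (-(p:ℝ)) / (p.factorial:ℝ)) := by
    intro p
    simp only [hF]
    have hP : ((3*p:ℕ):ℝ) = 3*(p:ℝ) := by push_cast; ring
    have e1 : (-1:ℝ)^(3*p) = (-1:ℝ)^p := by
      rw [pow_mul]; norm_num
    have e2 : ((2:ℝ)+1) ^ (((((3*p:ℕ)):ℝ)+1)/((2:ℝ)+1) - 1) = (3:ℝ)^p * (3:ℝ)^(-(2:ℝ)/3) := by
      rw [hP, show (3*((p:ℕ):ℝ)+1)/((2:ℝ)+1) - 1 = ((p:ℕ):ℝ) + (-(2:ℝ)/3) by ring,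
        show ((2:ℝ)+1) = 3 by norm_num, Real.rpow_add (by norm_num), Real.rpow_natCast]
    have e3 : x ^ (-((((3*p:ℕ):ℝ)+1)/((2:ℝ)+1)) - 1) = x ^ (-(4:ℝ)/3) * ((x:ℝ)^p)⁻¹ := by
      rw [hP, show -((3*((p:ℕ):ℝ)+1)/((2:ℝ)+1)) - 1 = (-(4:ℝ)/3) + (-((p:ℕ):ℝ)) by ring,
        Real.rpow_add hx, Real.rpow_neg hx.le, Real.rpow_natCast]
    have e4 : Real.Gamma (1 - (((3*p:ℕ):ℝ)+1)/((2:ℝ)+1)) = Real.Gamma (2/3 - (p:ℝ)) := by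
      rw [hP, show 1 - (3*((p:ℕ):ℝ)+1)/((2:ℝ)+1) = 2/3 - (p:ℝ) by ring]
    have e5 : Real.Gamma (1 - (((3*p:ℕ):ℝ)+2)/((2:ℝ)+1)) = Real.Gamma (1/3 - (p:ℝ)) := by
      rw [hP, show 1 - (3*((p:ℕ):ℝ)+2)/((2:ℝ)+1) = 1/3 - (p:ℝ) by ring]
    have e6 : (9*x) ^ (-(p:ℝ)) = ((9:ℝ)^p * x^p)⁻¹ := by
      rw [Real.rpow_neg (by positivity), Real.rpow_natCast, mul_pow]
    have hs3 : Real.sqrt 3 ≠ 0 := by positivity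
    have hD : ((3*p).factorial : ℝ) * Real.Gamma (2/3 - (p:ℝ)) * Real.Gamma (1/3 - (p:ℝ))
        = 2*Real.pi*(p.factorial:ℝ)*3^(3*p) / Real.sqrt 3 := by
      rw [eq_div_iff hs3]; linear_combination keyGamma p
    have e9 : (3:ℝ)^(-(2:ℝ)/3) * (3:ℝ)^((1:ℝ)/6) * Real.sqrt 3 = 1 := by
      rw [Real.sqrt_eq_rpow, ← Real.rpow_add (by norm_num), ← Real.rpow_add (by norm_num)]
      norm_num
    have e7 : (9:ℝ)^p = 3^(2*p) := by rw [pow_mul]; norm_num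
    rw [e1, e2, e3, e4, e5, e6, e7, hD]
    have h1 : (0:ℝ) < (3:ℝ)^(-(2:ℝ)/3) := rpow_pos_of_pos (by norm_num) _
    have h2 : (0:ℝ) < (3:ℝ)^((1:ℝ)/6) := rpow_pos_of_pos (by norm_num) _
    have h3 : (0:ℝ) < x ^ (-(4:ℝ)/3) := rpow_pos_of_pos hx _
    have hfa : ((p.factorial:ℝ)) ≠ 0 := by positivity
    have hfa3 : (((3*p).factorial:ℝ)) ≠ 0 := by positivity
    have hpi : Real.pi ≠ 0 := Real.pi_ne_zero
    field_simp
    ring_nf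
    linear_combination ((3:ℝ)^(3*p)) * e9
  have hsum2 : ∑' p : ℕ, F (3*p)
      = x ^ (-(4:ℝ)/3) / (2*Real.pi*(3:ℝ)^((1:ℝ)/6))
        * ∑' p : ℕ, ((-1:ℝ)^p * (9*x) ^ (-(p:ℝ)) / (p.factorial:ℝ)) := by
    rw [← tsum_mul_left]
    exact tsum_congr hterm
  have hexp : ∑' p : ℕ, ((-1:ℝ)^p * (9*x) ^ (-(p:ℝ)) / (p.factorial:ℝ))
      = Real.exp (-1/(9*x)) := by
    rw [Real.exp_eq_exp_ℝ, NormedSpace.exp_eq_tsum_div]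
    apply tsum_congr
    intro p
    rw [Real.rpow_neg (by positivity), Real.rpow_natCast, div_pow]
    ring
  have hmain : seriesDensity 2 x
      = Real.Gamma (2/3) * (x ^ (-(4:ℝ)/3) / (2*Real.pi*(3:ℝ)^((1:ℝ)/6)))
        * ∑' p : ℕ, ((-1:ℝ)^p * (9*x) ^ (-(p:ℝ)) / (p.factorial:ℝ)) := by
    rw [hsd, htsum, hsum2]; ring
  constructor
  · rw [hmain, hexp]; ring
  · rw [hmain]
    congr 1
    have hrefl := Real.Gamma_mul_Gamma_one_sub (1/3)
    rw [show (1:ℝ) - 1/3 = 2/3 by norm_num, show Real.pi * (1/3) = Real.pi/3 by ring,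
      Real.sin_pi_div_three] at hrefl
    rw [eq_div_iff (by positivity : Real.sqrt 3 / 2 ≠ 0)] at hrefl
    have hG13 : Real.Gamma (1/3) ≠ 0 := ne_of_gt (Real.Gamma_pos_of_pos (by norm_num))
    have e10 : (3:ℝ)^((2:ℝ)/3) = (3:ℝ)^((1:ℝ)/6) * Real.sqrt 3 := by
      rw [Real.sqrt_eq_rpow, ← Real.rpow_add (by norm_num)]
      norm_num
    have h2 : (0:ℝ) < (3:ℝ)^((1:ℝ)/6) := rpow_pos_of_pos (by norm_num) _
    have hs3 : (0:ℝ) < Real.sqrt 3 := by positivity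
    rw [e10]
    field_simp
    linear_combination (2:ℝ) * hrefl
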